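/- arXiv:1101.5790 — 2 statements merged into one kernel-verified Lean document; each statement's English description precedes it below -/
import Mathlib

section
/- Let T > 0, α ∈ (0,1/2), and let ξ : [0,T] → ℝ be a continuous function that is γ-Hölder continuous for some γ > 0. Then (T−t)^(1−2α) ∫₀ᵗ ξ(s)² (T−s)^(2α−2) ds → ξ(T)²/(1−2α) as t → T⁻. -/
open MeasureTheory Set Filter

theorem stmt16 (T α γ C : ℝ) (ξ : ℝ → ℝ) (hT : 0 < T)
    (hα : α ∈ Set.Ioo (0:ℝ) (1/2)) (hγ : 0 < γ) (hC : 0 < C)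
    (hHolder : ∀ s ∈ Set.Icc (0:ℝ) T, ∀ t ∈ Set.Icc (0:ℝ) T,
      |ξ t - ξ s| ≤ C * |t - s| ^ γ) :
    Filter.Tendsto (fun t : ℝ =>
      (T - t) ^ (1 - 2*α) * ∫ s in Set.Ioo (0:ℝ) t, (ξ s) ^ 2 * (T - s) ^ (2*α - 2))
      (nhdsWithin T (Set.Iio T)) (nhds ((ξ T) ^ 2 / (1 - 2*α))) := by
  obtain ⟨hα0, hαh⟩ := hα
  have h12 : 0 < 1 - 2*α := by linarith
  set γ' : ℝ := min γ ((1-2*α)/2) with hγ'def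
  have hγ'0 : 0 < γ' := lt_min hγ (by linarith)
  have hγ'lt : γ' < 1 - 2*α := lt_of_le_of_lt (min_le_right _ _) (by linarith)
  have hγ'le : γ' ≤ γ := min_le_left _ _
  have hT0 : (0:ℝ) ∈ Icc (0:ℝ) T := ⟨le_refl 0, hT.le⟩
  have hTT : T ∈ Icc (0:ℝ) T := ⟨hT.le, le_refl T⟩
  -- uniform bound on ξ
  set M : ℝ := |ξ 0| + C * T ^ γ with hMdef
  have hM0 : 0 ≤ M := by
    have : 0 ≤ C * T ^ γ := mul_nonneg hC.le (Real.rpow_nonneg hT.le γ)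
    positivity
  have hM : ∀ s ∈ Icc (0:ℝ) T, |ξ s| ≤ M := by
    intro s hs
    have h1 := hHolder 0 hT0 s hs
    have h2 : |s - 0| ^ γ ≤ T ^ γ := by
      rw [sub_zero, abs_of_nonneg hs.1]
      exact Real.rpow_le_rpow hs.1 hs.2 hγ.le
    calc |ξ s| = |(ξ s - ξ 0) + ξ 0| := by ring_nf
      _ ≤ |ξ s - ξ 0| + |ξ 0| := abs_add_le _ _
      _ ≤ C * |s - 0| ^ γ + |ξ 0| := by linarith
      _ ≤ C * T ^ γ + |ξ 0| := by nlinarith [Real.rpow_nonneg (abs_nonneg (s - 0)) γ]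
      _ = M := by rw [hMdef]; ring
  -- exponent reduction
  have hpow : ∀ x : ℝ, 0 ≤ x → x ≤ T → x ^ γ ≤ (1+T) ^ (γ - γ') * x ^ γ' := by
    intro x hx0 hxT
    rcases eq_or_lt_of_le hx0 with h | h
    · rw [← h, Real.zero_rpow hγ.ne', Real.zero_rpow hγ'0.ne', mul_zero]
    · have hx : x ^ γ = x ^ (γ - γ') * x ^ γ' := by
        rw [← Real.rpow_add h]; ring_nf
      rw [hx]
      have : x ^ (γ - γ') ≤ (1+T) ^ (γ - γ') :=
        Real.rpow_le_rpow hx0 (by linarith) (by linarith)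
      exact mul_le_mul_of_nonneg_right this (Real.rpow_nonneg hx0 γ')
  set K : ℝ := 2 * M * (C * (1+T) ^ (γ - γ')) with hKdef
  have hK0 : 0 ≤ K := by positivity
  have hKbd : ∀ s ∈ Icc (0:ℝ) T, |ξ s ^ 2 - ξ T ^ 2| ≤ K * (T - s) ^ γ' := by
    intro s hs
    have h1 := hHolder T hTT s hs
    have habs : |s - T| = T - s := by rw [abs_sub_comm, abs_of_nonneg (by linarith [hs.2])]
    rw [habs] at h1
    have h2 : (T - s) ^ γ ≤ (1+T) ^ (γ - γ') * (T - s) ^ γ' :=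
      hpow (T - s) (by linarith [hs.2]) (by linarith [hs.1])
    have h3 : |ξ s + ξ T| ≤ 2 * M := by
      calc |ξ s + ξ T| ≤ |ξ s| + |ξ T| := abs_add_le _ _
        _ ≤ 2 * M := by linarith [hM s hs, hM T hTT]
    calc |ξ s ^ 2 - ξ T ^ 2| = |ξ s - ξ T| * |ξ s + ξ T| := by
          rw [← abs_mul]; ring_nf
      _ ≤ (C * (T - s) ^ γ) * (2 * M) := by
          exact mul_le_mul h1 h3 (abs_nonneg _)
            (mul_nonneg hC.le (Real.rpow_nonneg (by linarith [hs.2]) _))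
      _ ≤ (C * ((1+T) ^ (γ - γ') * (T - s) ^ γ')) * (2 * M) := by
          have := mul_le_mul_of_nonneg_left h2 hC.le
          nlinarith
      _ = K * (T - s) ^ γ' := by rw [hKdef]; ring
  -- continuity of ξ on [0,T]
  have hξc : ContinuousOn ξ (Icc 0 T) := by
    intro s hs
    refine tendsto_iff_dist_tendsto_zero.2 ?_
    have hb : ∀ᶠ t in nhdsWithin s (Icc 0 T), dist (ξ t) (ξ s) ≤ C * |t - s| ^ γ := by
      filter_upwards [self_mem_nhdsWithin] with t ht
      rw [Real.dist_eq]
      exact hHolder s hs t ht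
    refine squeeze_zero' (Eventually.of_forall fun _ => dist_nonneg) hb ?_
    have h1 : Tendsto (fun t : ℝ => |t - s|) (nhds s) (nhds 0) := by
      have hc : Continuous (fun t : ℝ => |t - s|) := by fun_prop
      simpa using hc.tendsto s
    have h2 : Tendsto (fun x : ℝ => x ^ γ) (nhds 0) (nhds 0) := by
      have := (Real.continuousAt_rpow_const 0 γ (Or.inr hγ.le)).tendsto
      simpa [Real.zero_rpow hγ.ne'] using this
    have h3 := (h2.comp h1).const_mul C
    simpa using h3.mono_left nhdsWithin_le_nhds
  -- continuity of rpow factor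
  have hcont : ∀ p : ℝ, ∀ t, t < T → ContinuousOn (fun s => (T - s) ^ p) (Icc 0 t) := by
    intro p t htT
    apply ContinuousOn.rpow_const (by fun_prop)
    intro x hx
    left
    have : T - x > 0 := by linarith [hx.2]
    exact this.ne'
  -- key integral formula
  have hint : ∀ p : ℝ, p + 1 ≠ 0 → ∀ t : ℝ, t < T →
      ∫ s in (0:ℝ)..t, (T - s) ^ p = (T ^ (p+1) - (T-t) ^ (p+1)) / (p+1) := by
    intro p hp t htT
    have h1 : (∫ s in (0:ℝ)..t, (T - s) ^ p) = ∫ x in T - t..T - 0, x ^ p :=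
      intervalIntegral.integral_comp_sub_left (fun x => x ^ p) T
    rw [h1, sub_zero, integral_rpow (Or.inr ⟨fun h => hp (by rw [h]; ring),
      Set.notMem_uIcc_of_lt (by linarith) hT⟩)]
  -- integrability facts
  have hIcc_sub : ∀ t : ℝ, t ≤ T → Icc (0:ℝ) t ⊆ Icc (0:ℝ) T := fun t ht =>
    Icc_subset_Icc le_rfl ht
  have hInt1 : ∀ t ∈ Ioo (0:ℝ) T,
      IntervalIntegrable (fun s => (ξ s ^ 2 - ξ T ^ 2) * (T - s) ^ (2*α-2)) volume 0 t := by
    intro t ht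
    apply ContinuousOn.intervalIntegrable
    rw [uIcc_of_le ht.1.le]
    exact (((hξc.mono (hIcc_sub t ht.2.le)).pow 2).sub continuousOn_const).mul
      (hcont _ t ht.2)
  have hInt2 : ∀ t ∈ Ioo (0:ℝ) T,
      IntervalIntegrable (fun s => ξ T ^ 2 * (T - s) ^ (2*α-2)) volume 0 t := by
    intro t ht
    apply ContinuousOn.intervalIntegrable
    rw [uIcc_of_le ht.1.le]
    exact continuousOn_const.mul (hcont _ t ht.2)
  have hInt3 : ∀ t ∈ Ioo (0:ℝ) T,
      IntervalIntegrable (fun s => K * (T - s) ^ (γ' + (2*α-2))) volume 0 t := by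
    intro t ht
    apply ContinuousOn.intervalIntegrable
    rw [uIcc_of_le ht.1.le]
    exact continuousOn_const.mul (hcont _ t ht.2)
  have hInt1' : ∀ t ∈ Ioo (0:ℝ) T,
      IntervalIntegrable (fun s => |(ξ s ^ 2 - ξ T ^ 2) * (T - s) ^ (2*α-2)|) volume 0 t :=
    fun t ht => (hInt1 t ht).abs
  -- the main decomposition
  set G : ℝ → ℝ := fun t => ξ T ^ 2 * ((T-t) ^ (1-2*α) * T ^ (2*α-1) - 1) / (2*α-1)
    with hGdef
  set E : ℝ → ℝ := fun t =>
    (T-t) ^ (1-2*α) * ∫ s in (0:ℝ)..t, (ξ s ^ 2 - ξ T ^ 2) * (T - s) ^ (2*α-2)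
    with hEdef
  have hkey : ∀ t ∈ Ioo (0:ℝ) T,
      (T - t) ^ (1 - 2*α) * (∫ s in Set.Ioo (0:ℝ) t, (ξ s) ^ 2 * (T - s) ^ (2*α - 2))
        = G t + E t := by
    intro t ht
    have htT : 0 < T - t := by linarith [ht.2]
    have h1 : (∫ s in Set.Ioo (0:ℝ) t, (ξ s) ^ 2 * (T - s) ^ (2*α - 2))
        = ∫ s in (0:ℝ)..t, (ξ s) ^ 2 * (T - s) ^ (2*α - 2) := by
      rw [intervalIntegral.integral_of_le ht.1.le, MeasureTheory.integral_Ioc_eq_integral_Ioo]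
    have h2 : (∫ s in (0:ℝ)..t, (ξ s) ^ 2 * (T - s) ^ (2*α - 2))
        = (∫ s in (0:ℝ)..t, (ξ s ^ 2 - ξ T ^ 2) * (T - s) ^ (2*α-2))
          + ∫ s in (0:ℝ)..t, ξ T ^ 2 * (T - s) ^ (2*α-2) := by
      rw [← intervalIntegral.integral_add (hInt1 t ht) (hInt2 t ht)]
      congr 1
      ext s
      ring
    have h3 : (∫ s in (0:ℝ)..t, ξ T ^ 2 * (T - s) ^ (2*α-2))
        = ξ T ^ 2 * ((T ^ (2*α-1) - (T-t) ^ (2*α-1)) / (2*α-1)) := by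
      rw [intervalIntegral.integral_const_mul, hint (2*α-2) (by intro h; nlinarith) t ht.2,
        show 2*α-2+1 = 2*α-1 by ring]
    have hone : (T-t) ^ (1-2*α) * (T-t) ^ (2*α-1) = 1 := by
      rw [← Real.rpow_add htT]
      norm_num
    rw [h1, h2, h3]
    simp only [hGdef, hEdef]
    linear_combination (-(ξ T ^ 2)/(2*α-1)) * hone
  -- limit of (T - t)^p for p > 0
  have hrp : ∀ p : ℝ, 0 < p →
      Tendsto (fun t : ℝ => (T - t) ^ p) (nhdsWithin T (Set.Iio T)) (nhds 0) := by
    intro p hp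
    have h1 : Tendsto (fun t : ℝ => T - t) (nhds T) (nhds 0) := by
      have hc : Continuous (fun t : ℝ => T - t) := by fun_prop
      simpa using hc.tendsto T
    have h2 : Tendsto (fun x : ℝ => x ^ p) (nhds 0) (nhds 0) := by
      have := (Real.continuousAt_rpow_const 0 p (Or.inr hp.le)).tendsto
      simpa [Real.zero_rpow hp.ne'] using this
    exact (h2.comp h1).mono_left nhdsWithin_le_nhds
  -- limit of G
  have hG : Tendsto G (nhdsWithin T (Set.Iio T)) (nhds (ξ T ^ 2 / (1 - 2*α))) := by
    have h1 := ((((hrp (1-2*α) h12).mul_const (T ^ (2*α-1))).sub_const 1).const_mul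
      (ξ T ^ 2)).div_const (2*α-1)
    have h2 : ξ T ^ 2 * (0 * T ^ (2*α-1) - 1) / (2*α-1) = ξ T ^ 2 / (1 - 2*α) := by
      have hne1 : (2*α-1) ≠ 0 := by intro h; nlinarith
      have hne2 : (1-2*α) ≠ 0 := ne_of_gt h12
      rw [zero_mul, zero_sub]
      field_simp
      ring
    rw [← h2]
    exact h1
  -- bound on E
  have hEbd : ∀ t ∈ Ioo (0:ℝ) T, ‖E t‖ ≤ (K / (1 - 2*α - γ')) * (T - t) ^ γ' := by
    intro t ht
    have htT : 0 < T - t := by linarith [ht.2]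
    have hq : γ' + (2*α-2) + 1 = γ' + 2*α - 1 := by ring
    have hq0 : γ' + 2*α - 1 < 0 := by linarith
    -- bound the interval integral
    have hb1 : |∫ s in (0:ℝ)..t, (ξ s ^ 2 - ξ T ^ 2) * (T - s) ^ (2*α-2)|
        ≤ ∫ s in (0:ℝ)..t, |(ξ s ^ 2 - ξ T ^ 2) * (T - s) ^ (2*α-2)| :=
      intervalIntegral.abs_integral_le_integral_abs ht.1.le
    have hb2 : (∫ s in (0:ℝ)..t, |(ξ s ^ 2 - ξ T ^ 2) * (T - s) ^ (2*α-2)|)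
        ≤ ∫ s in (0:ℝ)..t, K * (T - s) ^ (γ' + (2*α-2)) := by
      apply intervalIntegral.integral_mono_on ht.1.le (hInt1' t ht) (hInt3 t ht)
      intro s hs
      have hTs : 0 < T - s := by linarith [hs.2, ht.2]
      rw [abs_mul, abs_of_nonneg (Real.rpow_nonneg hTs.le _)]
      have := hKbd s ⟨hs.1, by linarith [hs.2, ht.2]⟩
      calc |ξ s ^ 2 - ξ T ^ 2| * (T - s) ^ (2*α-2)
          ≤ (K * (T - s) ^ γ') * (T - s) ^ (2*α-2) :=
            mul_le_mul_of_nonneg_right this (Real.rpow_nonneg hTs.le _)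
        _ = K * (T - s) ^ (γ' + (2*α-2)) := by
            rw [Real.rpow_add hTs]; ring
    have hb3 : (∫ s in (0:ℝ)..t, K * (T - s) ^ (γ' + (2*α-2)))
        = K * ((T ^ (γ' + 2*α - 1) - (T-t) ^ (γ' + 2*α - 1)) / (γ' + 2*α - 1)) := by
      rw [intervalIntegral.integral_const_mul, hint (γ' + (2*α-2)) (by rw [hq]; linarith) t ht.2]
      rw [hq]
    have hb4 : K * ((T ^ (γ' + 2*α - 1) - (T-t) ^ (γ' + 2*α - 1)) / (γ' + 2*α - 1))
        ≤ K * ((T-t) ^ (γ' + 2*α - 1) / (1 - 2*α - γ')) := by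
      have hTp : 0 < T ^ (γ' + 2*α - 1) := Real.rpow_pos_of_pos hT _
      have heq : (T ^ (γ' + 2*α - 1) - (T-t) ^ (γ' + 2*α - 1)) / (γ' + 2*α - 1)
          = ((T-t) ^ (γ' + 2*α - 1) - T ^ (γ' + 2*α - 1)) / (1 - 2*α - γ') := by
        rw [div_eq_div_iff (by linarith) (by linarith)]
        ring
      rw [heq]
      apply mul_le_mul_of_nonneg_left _ hK0
      apply div_le_div_of_nonneg_right _ (by linarith)
      linarith
    have hpos : 0 ≤ (T - t) ^ (1 - 2*α) := Real.rpow_nonneg htT.le _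
    have hEnorm : ‖E t‖ = (T-t) ^ (1-2*α) *
        |∫ s in (0:ℝ)..t, (ξ s ^ 2 - ξ T ^ 2) * (T - s) ^ (2*α-2)| := by
      simp only [hEdef, Real.norm_eq_abs, abs_mul, abs_of_nonneg hpos]
    rw [hEnorm]
    have hchain : |∫ s in (0:ℝ)..t, (ξ s ^ 2 - ξ T ^ 2) * (T - s) ^ (2*α-2)|
        ≤ K * ((T-t) ^ (γ' + 2*α - 1) / (1 - 2*α - γ')) := by
      calc |∫ s in (0:ℝ)..t, (ξ s ^ 2 - ξ T ^ 2) * (T - s) ^ (2*α-2)|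
          ≤ ∫ s in (0:ℝ)..t, |(ξ s ^ 2 - ξ T ^ 2) * (T - s) ^ (2*α-2)| := hb1
        _ ≤ ∫ s in (0:ℝ)..t, K * (T - s) ^ (γ' + (2*α-2)) := hb2
        _ = K * ((T ^ (γ' + 2*α - 1) - (T-t) ^ (γ' + 2*α - 1)) / (γ' + 2*α - 1)) := hb3
        _ ≤ K * ((T-t) ^ (γ' + 2*α - 1) / (1 - 2*α - γ')) := hb4
    calc (T-t) ^ (1-2*α) * |∫ s in (0:ℝ)..t, (ξ s ^ 2 - ξ T ^ 2) * (T - s) ^ (2*α-2)|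
        ≤ (T-t) ^ (1-2*α) * (K * ((T-t) ^ (γ' + 2*α - 1) / (1 - 2*α - γ'))) :=
          mul_le_mul_of_nonneg_left hchain hpos
      _ = (K / (1 - 2*α - γ')) * ((T-t) ^ (1-2*α) * (T-t) ^ (γ' + 2*α - 1)) := by ring
      _ = (K / (1 - 2*α - γ')) * (T - t) ^ γ' := by
          rw [← Real.rpow_add htT]
          norm_num
  -- limit of E
  have hE : Tendsto E (nhdsWithin T (Set.Iio T)) (nhds 0) := by
    have hg := (hrp γ' hγ'0).const_mul (K / (1 - 2*α - γ'))
    rw [mul_zero] at hg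
    refine squeeze_zero_norm' ?_ hg
    filter_upwards [Ioo_mem_nhdsLT_of_mem (⟨hT, le_refl T⟩ : T ∈ Ioc 0 T)] with t ht
    exact hEbd t ht
  -- conclude
  have hGE : Tendsto (fun t => G t + E t) (nhdsWithin T (Set.Iio T))
      (nhds (ξ T ^ 2 / (1 - 2*α))) := by
    simpa using hG.add hE
  apply hGE.congr'
  filter_upwards [Ioo_mem_nhdsLT_of_mem (⟨hT, le_refl T⟩ : T ∈ Ioc 0 T)] with t ht
  exact (hkey t ht).symm
end

section
/- Let T ∈ (0,1) and let ξ : [0,T] → ℝ be a continuous function that is γ-Hölder continuous for some γ > 0. Then (1/|log(T−t)|) ∫₀ᵗ ξ(s)²/(T−s) ds → ξ(T)² as t → T⁻. -/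
open MeasureTheory Set Filter Real

theorem stmt17 (T γ C : ℝ) (ξ : ℝ → ℝ) (hT : T ∈ Set.Ioo (0:ℝ) 1)
    (hγ : 0 < γ) (hC : 0 < C)
    (hHolder : ∀ s ∈ Set.Icc (0:ℝ) T, ∀ t ∈ Set.Icc (0:ℝ) T,
      |ξ t - ξ s| ≤ C * |t - s| ^ γ) :
    Filter.Tendsto (fun t : ℝ =>
      (1 / |Real.log (T - t)|) * ∫ s in Set.Ioo (0:ℝ) t, (ξ s) ^ 2 / (T - s))
      (nhdsWithin T (Set.Iio T)) (nhds ((ξ T) ^ 2)) := by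
  obtain ⟨hT0, hT1⟩ := hT
  -- continuity of ξ on [0,T]
  have hcont : ContinuousOn ξ (Icc 0 T) := by
    intro x hx
    have h0 : Tendsto (fun t => ξ t - ξ x) (nhdsWithin x (Icc 0 T)) (nhds 0) := by
      apply squeeze_zero_norm' (a := fun t => C * |t - x| ^ γ)
      · filter_upwards [self_mem_nhdsWithin] with t ht
        simpa [Real.norm_eq_abs] using hHolder x hx t ht
      · have h1 : Tendsto (fun t : ℝ => |t - x|) (nhdsWithin x (Icc 0 T)) (nhds 0) := by
          have h : Continuous (fun t : ℝ => |t - x|) :=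
            (continuous_id.sub continuous_const).abs
          have := (h.tendsto x).mono_left (nhdsWithin_le_nhds (s := Icc 0 T))
          simpa using this
        have h2 : ContinuousAt (fun y : ℝ => C * y ^ γ) 0 :=
          continuousAt_const.mul (Real.continuousAt_rpow_const 0 γ (Or.inr hγ.le))
        have := h2.tendsto.comp h1
        simpa [Function.comp_def, Real.zero_rpow hγ.ne'] using this
    have := h0.add_const (ξ x)
    simpa [ContinuousWithinAt] using this
  set M : ℝ := C * T ^ γ + 2 * |ξ T| with hM
  have hM0 : 0 ≤ M := by positivity
  set K : ℝ := C * M * (T ^ γ / γ) with hK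
  have hK0 : 0 ≤ K := by positivity
  set c : ℝ := ξ T ^ 2 with hc
  -- facts for each t ∈ Ioo 0 T
  have key : ∀ t ∈ Ioo (0:ℝ) T,
      ‖(1 / |Real.log (T - t)|) * (∫ s in Ioo (0:ℝ) t, (ξ s) ^ 2 / (T - s)) - c‖
        ≤ (|c * Real.log T| + K) * |Real.log (T - t)|⁻¹ := by
    intro t ht
    obtain ⟨ht0, htT⟩ := ht
    have hTt : 0 < T - t := by linarith
    have hTt1 : T - t < 1 := by linarith
    have hlog : Real.log (T - t) < 0 := Real.log_neg hTt hTt1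
    have habs : |Real.log (T - t)| = -Real.log (T - t) := abs_of_neg hlog
    have hICC : Icc (0:ℝ) t ⊆ Icc 0 T := Icc_subset_Icc le_rfl htT.le
    have hden : ∀ s ∈ Icc (0:ℝ) t, 0 < T - s := fun s hs => by
      have := hs.2; linarith
    have hcontden : ContinuousOn (fun s : ℝ => T - s) (Icc 0 t) :=
      (continuous_const.sub continuous_id).continuousOn
    -- integrabilities
    have hI : IntegrableOn (fun s => ξ s ^ 2 / (T - s)) (Ioo 0 t) := by
      apply (ContinuousOn.integrableOn_Icc ?_).mono_set Ioo_subset_Icc_self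
      exact ((hcont.mono hICC).pow 2).div hcontden fun s hs => (hden s hs).ne'
    have hI1 : IntegrableOn (fun s : ℝ => ξ T ^ 2 / (T - s)) (Ioo 0 t) := by
      apply (ContinuousOn.integrableOn_Icc ?_).mono_set Ioo_subset_Icc_self
      exact continuousOn_const.div hcontden fun s hs => (hden s hs).ne'
    have hI2 : IntegrableOn (fun s => (ξ s ^ 2 - ξ T ^ 2) / (T - s)) (Ioo 0 t) := by
      have heq : (fun s : ℝ => (ξ s ^ 2 - ξ T ^ 2) / (T - s))
          = fun s => ξ s ^ 2 / (T - s) - ξ T ^ 2 / (T - s) := by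
        funext s; rw [sub_div]
      rw [heq]; exact hI.sub hI1
    have hIg : IntegrableOn (fun s : ℝ => C * M * (T - s) ^ (γ - 1)) (Ioo 0 t) := by
      apply (ContinuousOn.integrableOn_Icc ?_).mono_set Ioo_subset_Icc_self
      exact continuousOn_const.mul
        (hcontden.rpow_const fun s hs => Or.inl (hden s hs).ne')
    -- value of first integral
    have hval1 : (∫ s in Ioo (0:ℝ) t, ξ T ^ 2 / (T - s))
        = c * (Real.log T - Real.log (T - t)) := by
      rw [← integral_Ioc_eq_integral_Ioo, ← intervalIntegral.integral_of_le ht0.le]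
      have e1 : ∀ s : ℝ, ξ T ^ 2 / (T - s) = ξ T ^ 2 * (T - s)⁻¹ := fun s => by
        rw [div_eq_mul_inv]
      simp_rw [e1]
      rw [intervalIntegral.integral_const_mul,
        intervalIntegral.integral_comp_sub_left (fun x : ℝ => x⁻¹) T, sub_zero,
        integral_inv, Real.log_div hT0.ne' hTt.ne']
      rw [Set.uIcc_of_le (by linarith)]
      intro h0mem
      have := h0mem.1
      linarith
    -- bound on error integral
    have hbound : |∫ s in Ioo (0:ℝ) t, (ξ s ^ 2 - ξ T ^ 2) / (T - s)| ≤ K := by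
      have step1 : ‖∫ s in Ioo (0:ℝ) t, (ξ s ^ 2 - ξ T ^ 2) / (T - s)‖
          ≤ ∫ s in Ioo (0:ℝ) t, C * M * (T - s) ^ (γ - 1) := by
        apply norm_integral_le_of_norm_le hIg
        rw [ae_restrict_iff' measurableSet_Ioo]
        filter_upwards with s hs
        obtain ⟨hs0, hst⟩ := hs
        have hTs : 0 < T - s := by linarith
        have hsIcc : s ∈ Icc (0:ℝ) T := ⟨hs0.le, by linarith⟩
        have hdiff : |ξ s - ξ T| ≤ C * (T - s) ^ γ := by
          have h := hHolder T ⟨hT0.le, le_rfl⟩ s hsIcc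
          rw [show |s - T| = T - s by rw [abs_of_nonpos (by linarith), neg_sub]] at h
          exact h
        have hsum : |ξ s + ξ T| ≤ M := by
          have h1 : |ξ s + ξ T| ≤ |ξ s - ξ T| + 2 * |ξ T| := by
            have : ξ s + ξ T = (ξ s - ξ T) + 2 * ξ T := by ring
            rw [this]
            calc |(ξ s - ξ T) + 2 * ξ T| ≤ |ξ s - ξ T| + |2 * ξ T| := abs_add_le _ _
              _ = |ξ s - ξ T| + 2 * |ξ T| := by rw [abs_mul]; norm_num
          have h2 : C * (T - s) ^ γ ≤ C * T ^ γ := by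
            apply mul_le_mul_of_nonneg_left _ hC.le
            exact Real.rpow_le_rpow hTs.le (by linarith) hγ.le
          linarith [hdiff]
        have hnum : |ξ s ^ 2 - ξ T ^ 2| ≤ C * (T - s) ^ γ * M := by
          have : ξ s ^ 2 - ξ T ^ 2 = (ξ s - ξ T) * (ξ s + ξ T) := by ring
          rw [this, abs_mul]
          exact mul_le_mul hdiff hsum (abs_nonneg _) (by positivity)
        have hrw : (T - s) ^ (γ - 1) = (T - s) ^ γ / (T - s) := by
          rw [Real.rpow_sub hTs, Real.rpow_one]
        rw [Real.norm_eq_abs, abs_div, abs_of_pos hTs, hrw]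
        have h2 : C * M * ((T - s) ^ γ / (T - s)) = (C * (T - s) ^ γ * M) / (T - s) := by
          ring
        rw [h2]
        exact (div_le_div_iff_of_pos_right hTs).mpr hnum
      have step2 : (∫ s in Ioo (0:ℝ) t, C * M * (T - s) ^ (γ - 1)) ≤ K := by
        rw [← integral_Ioc_eq_integral_Ioo, ← intervalIntegral.integral_of_le ht0.le,
          intervalIntegral.integral_const_mul,
          intervalIntegral.integral_comp_sub_left (fun x : ℝ => x ^ (γ - 1)) T, sub_zero]
        rw [integral_rpow (Or.inl (by linarith))]
        have hγe : γ - 1 + 1 = γ := by ring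
        rw [hγe]
        have h1 : (T ^ γ - (T - t) ^ γ) / γ ≤ T ^ γ / γ := by
          apply (div_le_div_iff_of_pos_right hγ).mpr
          linarith [Real.rpow_nonneg (show (0:ℝ) ≤ T - t by linarith) γ]
        calc C * M * ((T ^ γ - (T - t) ^ γ) / γ) ≤ C * M * (T ^ γ / γ) :=
              mul_le_mul_of_nonneg_left h1 (by positivity)
          _ = K := rfl
      calc |∫ s in Ioo (0:ℝ) t, (ξ s ^ 2 - ξ T ^ 2) / (T - s)|
          ≤ ∫ s in Ioo (0:ℝ) t, C * M * (T - s) ^ (γ - 1) := step1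
        _ ≤ K := step2
    -- full integral split
    have hsplit : (∫ s in Ioo (0:ℝ) t, ξ s ^ 2 / (T - s))
        = c * (Real.log T - Real.log (T - t))
          + ∫ s in Ioo (0:ℝ) t, (ξ s ^ 2 - ξ T ^ 2) / (T - s) := by
      rw [← hval1, ← integral_add hI1 hI2]
      apply setIntegral_congr_fun measurableSet_Ioo
      intro s _
      show ξ s ^ 2 / (T - s) = ξ T ^ 2 / (T - s) + (ξ s ^ 2 - ξ T ^ 2) / (T - s)
      ring
    set E : ℝ := ∫ s in Ioo (0:ℝ) t, (ξ s ^ 2 - ξ T ^ 2) / (T - s) with hE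
    have heq : (1 / |Real.log (T - t)|) * (∫ s in Ioo (0:ℝ) t, ξ s ^ 2 / (T - s)) - c
        = (c * Real.log T + E) / |Real.log (T - t)| := by
      rw [hsplit, habs]
      have hne : Real.log (T - t) ≠ 0 := hlog.ne
      field_simp [hne]
      ring
    rw [heq, Real.norm_eq_abs, abs_div, abs_abs, div_eq_mul_inv]
    apply mul_le_mul_of_nonneg_right _ (inv_nonneg.mpr (abs_nonneg _))
    calc |c * Real.log T + E| ≤ |c * Real.log T| + |E| := abs_add_le _ _
      _ ≤ |c * Real.log T| + K := by linarith [hbound]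
  -- bound tends to zero
  have hbnd0 : Tendsto (fun t : ℝ => (|c * Real.log T| + K) * |Real.log (T - t)|⁻¹)
      (nhdsWithin T (Iio T)) (nhds 0) := by
    have h1 : Tendsto (fun t : ℝ => T - t) (nhdsWithin T (Iio T)) (nhdsWithin 0 (Ioi 0)) := by
      apply tendsto_nhdsWithin_of_tendsto_nhds_of_eventually_within
      · have hcts : Continuous (fun t : ℝ => T - t) := continuous_const.sub continuous_id
        have := (hcts.tendsto T).mono_left (nhdsWithin_le_nhds (s := Iio T))
        simpa using this
      · filter_upwards [self_mem_nhdsWithin] with t ht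
        simpa [sub_pos] using ht
    have h2 : Tendsto (fun t : ℝ => Real.log (T - t)) (nhdsWithin T (Iio T)) atBot :=
      Real.tendsto_log_nhdsGT_zero.comp h1
    have h3 : Tendsto (fun t : ℝ => |Real.log (T - t)|) (nhdsWithin T (Iio T)) atTop :=
      tendsto_abs_atBot_atTop.comp h2
    have h4 := (tendsto_inv_atTop_zero.comp h3).const_mul (|c * Real.log T| + K)
    simpa using h4
  have hmain : Tendsto (fun t : ℝ =>
      (1 / |Real.log (T - t)|) * (∫ s in Ioo (0:ℝ) t, ξ s ^ 2 / (T - s)) - c)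
      (nhdsWithin T (Iio T)) (nhds 0) := by
    apply squeeze_zero_norm' _ hbnd0
    filter_upwards [Ioo_mem_nhdsLT_of_mem (⟨hT0, le_refl T⟩ : T ∈ Ioc 0 T)] with t ht
    exact key t ht
  have := hmain.add_const c
  simpa using this
end
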